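/- LPostQAL ⊆ uQAL: if L ⊆ Σ* is recognized with some error bound ε < 1/2 by a Latvian RT-PostQFA, then there exist an RT-QFA and a cutpoint λ ∈ ℝ such that either L = {w : f^a(w) > λ} or L = {w : f^a(w) ≥ λ}; indeed, if the flag τ = A the recognition is with nonstrict cutpoint, and if τ = R it is with strict cutpoint. -/

import Mathlib

noncomputable section

/-- The input alphabet extended with the two endmarkers `¢` and `$`. -/
inductive ESym (α : Type) : Type where
  | cent : ESym α
  | dollar : ESym α
  | letter : α → ESym α

/-- The diagonal 0-1 projection matrix supported on a set of states. -/
def projM {m : ℕ} (S : Finset (Fin m)) : Matrix (Fin m) (Fin m) ℂ :=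
  Matrix.diagonal (fun i => if i ∈ S then 1 else 0)

/-- The density matrix obtained by applying, in order, the Kraus families for
`¢`, the letters of `w`, and `$` to the initial density matrix `|q₁⟩⟨q₁|`. -/
def qRun {α : Type} {n : ℕ} {k : ESym α → ℕ}
    (E : ∀ σ : ESym α, Fin (k σ) → Matrix (Fin (n + 1)) (Fin (n + 1)) ℂ)
    (w : List α) : Matrix (Fin (n + 1)) (Fin (n + 1)) ℂ :=
  (ESym.cent :: (w.map ESym.letter ++ [ESym.dollar])).foldl
    (fun ρ σ => ∑ i : Fin (k σ), E σ i * ρ * (E σ i).conjTranspose)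
    (Matrix.single 0 0 1)

/-- A real-time quantum finite automaton with postselection (RT-PostQFA). -/
structure PostQFA (α : Type) where
  n : ℕ
  k : ESym α → ℕ
  E : ∀ σ : ESym α, Fin (k σ) → Matrix (Fin (n + 1)) (Fin (n + 1)) ℂ
  kraus : ∀ σ : ESym α, ∑ i : Fin (k σ), (E σ i).conjTranspose * E σ i = 1
  Qpa : Finset (Fin (n + 1))
  Qpr : Finset (Fin (n + 1))
  disj : Disjoint Qpa Qpr
  postPos : ∀ w : List α,
    0 < ((projM Qpa * qRun E w).trace).re + ((projM Qpr * qRun E w).trace).re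

/-- Acceptance probability before postselection. -/
def PostQFA.pacc {α : Type} (M : PostQFA α) (w : List α) : ℝ :=
  ((projM M.Qpa * qRun M.E w).trace).re

/-- Rejection probability before postselection. -/
def PostQFA.prej {α : Type} (M : PostQFA α) (w : List α) : ℝ :=
  ((projM M.Qpr * qRun M.E w).trace).re

/-- Normalized acceptance probability of an RT-PostQFA. -/
def PostQFA.fa {α : Type} (M : PostQFA α) (w : List α) : ℝ :=
  M.pacc w / (M.pacc w + M.prej w)

/-- Recognition of a language with error bound `ε`. -/
def PostQFA.Recognizes {α : Type} (M : PostQFA α) (L : Set (List α)) (ε : ℝ) : Prop :=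
  ∀ w : List α, (w ∈ L → 1 - ε ≤ M.fa w) ∧ (w ∉ L → M.fa w ≤ ε)

/-- The class of languages recognized by RT-PostQFAs with bounded error. -/
def PostQAL {α : Type} (L : Set (List α)) : Prop :=
  ∃ (M : PostQFA α) (ε : ℝ), 0 ≤ ε ∧ ε < 1 / 2 ∧ M.Recognizes L ε

/-- Recognition with zero error: `fa = 1` on members, `fa = 0` on non-members. -/
def PostQFA.RecognizesZero {α : Type} (M : PostQFA α) (L : Set (List α)) : Prop :=
  ∀ w : List α, (w ∈ L → M.fa w = 1) ∧ (w ∉ L → M.fa w = 0)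

/-- The class of languages recognized by RT-PostQFAs with zero error. -/
def ZPostQAL {α : Type} (L : Set (List α)) : Prop :=
  ∃ M : PostQFA α, M.RecognizesZero L

/-- A standard real-time quantum finite automaton (RT-QFA). -/
structure QFA (α : Type) where
  n : ℕ
  k : ESym α → ℕ
  E : ∀ σ : ESym α, Fin (k σ) → Matrix (Fin (n + 1)) (Fin (n + 1)) ℂ
  kraus : ∀ σ : ESym α, ∑ i : Fin (k σ), (E σ i).conjTranspose * E σ i = 1
  Qa : Finset (Fin (n + 1))

/-- Acceptance probability of an RT-QFA. -/
def QFA.fa {α : Type} (M : QFA α) (w : List α) : ℝ :=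
  ((projM M.Qa * qRun M.E w).trace).re

/-- The flag of a Latvian postselection automaton: accept (`A`) or reject (`R`)
with certainty when the postselection probability is zero. -/
inductive PostFlag : Type where
  | A : PostFlag
  | R : PostFlag
deriving DecidableEq

/-- A Latvian RT-PostQFA: an RT-PostQFA without the positivity requirement,
together with a flag `τ ∈ {A, R}`. -/
structure LPostQFA (α : Type) where
  n : ℕ
  k : ESym α → ℕ
  E : ∀ σ : ESym α, Fin (k σ) → Matrix (Fin (n + 1)) (Fin (n + 1)) ℂ
  kraus : ∀ σ : ESym α, ∑ i : Fin (k σ), (E σ i).conjTranspose * E σ i = 1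
  Qpa : Finset (Fin (n + 1))
  Qpr : Finset (Fin (n + 1))
  disj : Disjoint Qpa Qpr
  tau : PostFlag

/-- Acceptance probability before postselection. -/
def LPostQFA.pacc {α : Type} (M : LPostQFA α) (w : List α) : ℝ :=
  ((projM M.Qpa * qRun M.E w).trace).re

/-- Rejection probability before postselection. -/
def LPostQFA.prej {α : Type} (M : LPostQFA α) (w : List α) : ℝ :=
  ((projM M.Qpr * qRun M.E w).trace).re

/-- Acceptance probability of a Latvian RT-PostQFA. -/
def LPostQFA.fa {α : Type} (M : LPostQFA α) (w : List α) : ℝ :=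
  if 0 < M.pacc w + M.prej w then M.pacc w / (M.pacc w + M.prej w)
  else if M.tau = PostFlag.A then 1 else 0

/-- Recognition of a language with error bound `ε`. -/
def LPostQFA.Recognizes {α : Type} (M : LPostQFA α) (L : Set (List α)) (ε : ℝ) : Prop :=
  ∀ w : List α, (w ∈ L → 1 - ε ≤ M.fa w) ∧ (w ∉ L → M.fa w ≤ ε)

/-- Recognition with zero error: `fa = 1` on members, `fa = 0` on non-members. -/
def LPostQFA.RecognizesZero {α : Type} (M : LPostQFA α) (L : Set (List α)) : Prop :=
  ∀ w : List α, (w ∈ L → M.fa w = 1) ∧ (w ∉ L → M.fa w = 0)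


/-! ### Auxiliary machinery -/

namespace LPQAux

open Matrix ComplexOrder

variable {α : Type}

/-- One Kraus step. -/
def dstep {m : Type} [Fintype m] {k : ℕ} (E : Fin k → Matrix m m ℂ)
    (ρ : Matrix m m ℂ) : Matrix m m ℂ :=
  ∑ i, E i * ρ * (E i).conjTranspose

lemma foldl_comm {A B S : Type} (T : A → B) (f : S → A → A) (g : S → B → B)
    (l : List S) (h : ∀ σ ∈ l, ∀ ρ, g σ (T ρ) = T (f σ ρ)) (ρ0 : A) :
    l.foldl (fun ρ σ => g σ ρ) (T ρ0) = T (l.foldl (fun ρ σ => f σ ρ) ρ0) := by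
  induction l generalizing ρ0 with
  | nil => rfl
  | cons σ l ih =>
    simp only [List.foldl_cons]
    rw [h σ (by simp) ρ0, ih]
    intro τ hτ ρ
    exact h τ (by simp [hτ]) ρ

lemma foldl_pred {A S : Type} (P : A → Prop) (f : S → A → A) (l : List S)
    (h : ∀ σ ∈ l, ∀ ρ, P ρ → P (f σ ρ)) {ρ0 : A} (h0 : P ρ0) :
    P (l.foldl (fun ρ σ => f σ ρ) ρ0) := by
  induction l generalizing ρ0 with
  | nil => exact h0
  | cons σ l ih =>
    simp only [List.foldl_cons]
    exact ih (fun τ hτ ρ hρ => h τ (by simp [hτ]) ρ hρ) (h σ (by simp) ρ0 h0)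

lemma dstep_trace {m : Type} [Fintype m] [DecidableEq m] {k : ℕ}
    (E : Fin k → Matrix m m ℂ) (hK : ∑ i, (E i).conjTranspose * E i = 1)
    (ρ : Matrix m m ℂ) : (dstep E ρ).trace = ρ.trace := by
  unfold dstep
  calc (∑ i, E i * ρ * (E i).conjTranspose).trace
      = ∑ i, ((E i).conjTranspose * E i * ρ).trace := by
        rw [trace_sum]
        refine Finset.sum_congr rfl fun i _ => ?_
        rw [Matrix.trace_mul_comm, ← Matrix.mul_assoc]
    _ = ((∑ i, (E i).conjTranspose * E i) * ρ).trace := by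
        rw [Finset.sum_mul, trace_sum]
    _ = ρ.trace := by rw [hK, Matrix.one_mul]

lemma psd_add {m : Type} [Fintype m] {A B : Matrix m m ℂ}
    (hA : A.PosSemidef) (hB : B.PosSemidef) : (A + B).PosSemidef := by
  refine ⟨hA.1.add hB.1, fun x => ?_⟩
  have := add_nonneg (hA.2 x) (hB.2 x)
  simpa [mul_add, add_mul] using this

lemma psd_sum {m ι : Type} [Fintype m] (s : Finset ι) (f : ι → Matrix m m ℂ)
    (h : ∀ i ∈ s, (f i).PosSemidef) : (∑ i ∈ s, f i).PosSemidef := by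
  classical
  induction s using Finset.induction_on with
  | empty => simpa using Matrix.PosSemidef.zero
  | insert _ _ hx ih =>
    rw [Finset.sum_insert hx]
    exact psd_add (h _ (by simp)) (ih fun i hi => h i (by simp [hi]))

lemma dstep_psd {m : Type} [Fintype m] {k : ℕ} (E : Fin k → Matrix m m ℂ)
    {ρ : Matrix m m ℂ} (hρ : ρ.PosSemidef) : (dstep E ρ).PosSemidef :=
  psd_sum _ _ fun i _ => hρ.mul_mul_conjTranspose_same (E i)

lemma stdBasis_psd {m : ℕ} :
    (Matrix.single (0 : Fin (m+1)) (0 : Fin (m+1)) (1:ℂ)).PosSemidef := by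
  have h : (Matrix.single (0 : Fin (m+1)) (0 : Fin (m+1)) (1:ℂ)).conjTranspose *
      Matrix.single (0 : Fin (m+1)) (0 : Fin (m+1)) (1:ℂ) =
      Matrix.single (0 : Fin (m+1)) (0 : Fin (m+1)) (1:ℂ) := by
    ext i j
    simp only [Matrix.mul_apply, Matrix.conjTranspose_apply, Matrix.single,
      Matrix.of_apply]
    by_cases hi : i = 0 <;> by_cases hj : j = 0 <;>
      simp [eq_comm, hi, hj, ite_and, Finset.sum_ite_eq]
  have h2 := Matrix.posSemidef_conjTranspose_mul_self
    (Matrix.single (0 : Fin (m+1)) (0 : Fin (m+1)) (1:ℂ))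
  rwa [h] at h2

lemma stdBasis_trace {m : ℕ} :
    (Matrix.single (0 : Fin (m+1)) (0 : Fin (m+1)) (1:ℂ)).trace = 1 := by
  simp [Matrix.trace, Matrix.diag, Matrix.single]

lemma qRun_eq_foldl {n : ℕ} {k : ESym α → ℕ}
    (E : ∀ σ : ESym α, Fin (k σ) → Matrix (Fin (n + 1)) (Fin (n + 1)) ℂ)
    (w : List α) :
    qRun E w = (ESym.cent :: (w.map ESym.letter ++ [ESym.dollar])).foldl
      (fun ρ σ => dstep (E σ) ρ) (Matrix.single 0 0 1) := rfl

lemma qRun_trace {n : ℕ} {k : ESym α → ℕ}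
    (E : ∀ σ : ESym α, Fin (k σ) → Matrix (Fin (n + 1)) (Fin (n + 1)) ℂ)
    (hK : ∀ σ, ∑ i, (E σ i).conjTranspose * E σ i = 1)
    (w : List α) : (qRun E w).trace = 1 := by
  rw [qRun_eq_foldl]
  have := foldl_pred (fun ρ : Matrix (Fin (n+1)) (Fin (n+1)) ℂ => ρ.trace = 1)
    (fun σ ρ => dstep (E σ) ρ) (ESym.cent :: (w.map ESym.letter ++ [ESym.dollar]))
    (fun σ _ ρ hρ => by
      show (dstep (E σ) ρ).trace = 1
      rw [dstep_trace (E σ) (hK σ) ρ]; exact hρ) stdBasis_trace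
  exact this

lemma qRun_psd {n : ℕ} {k : ESym α → ℕ}
    (E : ∀ σ : ESym α, Fin (k σ) → Matrix (Fin (n + 1)) (Fin (n + 1)) ℂ)
    (w : List α) : (qRun E w).PosSemidef := by
  rw [qRun_eq_foldl]
  exact foldl_pred (fun ρ : Matrix (Fin (n+1)) (Fin (n+1)) ℂ => ρ.PosSemidef)
    (fun σ ρ => dstep (E σ) ρ) _ (fun σ _ ρ hρ => dstep_psd _ hρ) stdBasis_psd

lemma projM_mul_trace {m : ℕ} (S : Finset (Fin m)) (A : Matrix (Fin m) (Fin m) ℂ) :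
    (projM S * A).trace = ∑ q ∈ S, A q q := by
  rw [Matrix.trace]
  simp only [Matrix.diag_apply, projM, Matrix.diagonal_mul, ite_mul, one_mul, zero_mul]
  rw [Finset.sum_ite_mem, Finset.univ_inter]

lemma psd_diag_re_nonneg {m : Type} [Fintype m] [DecidableEq m]
    {A : Matrix m m ℂ} (hA : A.PosSemidef) (q : m) : 0 ≤ (A q q).re := by
  have h := hA.dotProduct_mulVec_nonneg (Pi.single q 1)
  have : (star (Pi.single q 1 : m → ℂ)) ⬝ᵥ (A *ᵥ Pi.single q 1) = A q q := by
    rw [Matrix.mulVec_single]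
    simp [dotProduct, Pi.single_apply, apply_ite]
  rw [this] at h
  exact (Complex.le_def.mp h).1

/-! ### Block matrix helpers -/

lemma sum_fromBlocks {ι₀ m : Type} [Fintype ι₀] [Fintype m] (s : Finset ι₀)
    (f g h' k' : ι₀ → Matrix m m ℂ) :
    ∑ i ∈ s, Matrix.fromBlocks (f i) (g i) (h' i) (k' i) =
      Matrix.fromBlocks (∑ i ∈ s, f i) (∑ i ∈ s, g i) (∑ i ∈ s, h' i) (∑ i ∈ s, k' i) := by
  ext i j
  rcases i with i | i <;> rcases j with j | j <;>
    simp [Matrix.sum_apply]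

lemma dstep_smul {m : Type} [Fintype m] {k : ℕ} (E : Fin k → Matrix m m ℂ)
    (c : ℂ) (ρ : Matrix m m ℂ) : dstep E (c • ρ) = c • dstep E ρ := by
  unfold dstep
  rw [Finset.smul_sum]
  refine Finset.sum_congr rfl fun i _ => ?_
  rw [Matrix.mul_smul, Matrix.smul_mul]

lemma dbl_step {m : Type} [Fintype m] [DecidableEq m] {k : ℕ}
    (E : Fin k → Matrix m m ℂ) (X : Matrix m m ℂ) :
    dstep (fun i => Matrix.fromBlocks (E i) 0 0 (E i)) (Matrix.fromBlocks X 0 0 X) =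
      Matrix.fromBlocks (dstep E X) 0 0 (dstep E X) := by
  unfold dstep
  have h : ∀ i : Fin k, Matrix.fromBlocks (E i) 0 0 (E i) * Matrix.fromBlocks X 0 0 X *
      (Matrix.fromBlocks (E i) 0 0 (E i)).conjTranspose =
      Matrix.fromBlocks (E i * X * (E i).conjTranspose) 0 0
        (E i * X * (E i).conjTranspose) := by
    intro i
    simp [Matrix.fromBlocks_conjTranspose, Matrix.fromBlocks_multiply]
  rw [Finset.sum_congr rfl fun i _ => h i, sum_fromBlocks]
  simp

lemma dbl_kraus {m : Type} [Fintype m] [DecidableEq m] {k : ℕ}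
    (E : Fin k → Matrix m m ℂ) (hK : ∑ i, (E i).conjTranspose * E i = 1) :
    ∑ i, (Matrix.fromBlocks (E i) 0 0 (E i)).conjTranspose *
        Matrix.fromBlocks (E i) 0 0 (E i) = 1 := by
  have : ∀ i : Fin k, (Matrix.fromBlocks (E i) 0 0 (E i)).conjTranspose *
      Matrix.fromBlocks (E i) 0 0 (E i) =
      Matrix.fromBlocks ((E i).conjTranspose * E i) 0 0 ((E i).conjTranspose * E i) := by
    intro i
    simp [Matrix.fromBlocks_conjTranspose, Matrix.fromBlocks_multiply]
  rw [Finset.sum_congr rfl fun i _ => this i, sum_fromBlocks]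
  simp [hK, Matrix.fromBlocks_one]

/-! ### The doubled automaton -/

section Construction

variable (N : LPostQFA α)

/-- The scalar `1/√2`. -/
def rt2 : ℂ := ((Real.sqrt 2)⁻¹ : ℝ)

lemma rt2_mul_self : rt2 * rt2 = (2⁻¹ : ℂ) := by
  unfold rt2
  rw [← Complex.ofReal_mul, ← Real.sqrt_inv, Real.mul_self_sqrt (by norm_num)]
  norm_num

lemma star_rt2 : star rt2 = rt2 := by
  unfold rt2
  exact Complex.conj_ofReal _

/-- The Kraus family for `¢` of the doubled automaton, indexed by a sum type. -/
def sCentF : (Fin (N.k ESym.cent) ⊕ Fin (N.k ESym.cent)) ⊕ Fin 1 →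
    Matrix (Fin (N.n+1) ⊕ Fin (N.n+1)) (Fin (N.n+1) ⊕ Fin (N.n+1)) ℂ
  | .inl (.inl i) => rt2 • Matrix.fromBlocks (N.E ESym.cent i) 0 0 0
  | .inl (.inr i) => rt2 • Matrix.fromBlocks 0 0 (N.E ESym.cent i) 0
  | .inr _ => Matrix.fromBlocks 0 0 0 1

/-- Index equivalence for the `¢` family. -/
def eC : ((Fin (N.k ESym.cent) ⊕ Fin (N.k ESym.cent)) ⊕ Fin 1) ≃
    Fin (N.k ESym.cent + N.k ESym.cent + 1) :=
  (Equiv.sumCongr finSumFinEquiv (Equiv.refl (Fin 1))).trans finSumFinEquiv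

/-- Number of Kraus operators of the doubled automaton. -/
def k' : ESym α → ℕ
  | .cent => N.k ESym.cent + N.k ESym.cent + 1
  | .dollar => N.k ESym.dollar
  | .letter a => N.k (ESym.letter a)

/-- The Kraus families of the doubled automaton, on the sum-indexed state space. -/
def F : ∀ σ : ESym α, Fin (k' N σ) →
    Matrix (Fin (N.n+1) ⊕ Fin (N.n+1)) (Fin (N.n+1) ⊕ Fin (N.n+1)) ℂ
  | .cent => fun j => sCentF N ((eC N).symm j)
  | .dollar => fun i => Matrix.fromBlocks (N.E ESym.dollar i) 0 0 (N.E ESym.dollar i)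
  | .letter a => fun i => Matrix.fromBlocks (N.E (ESym.letter a) i) 0 0 (N.E (ESym.letter a) i)

lemma sum_F_cent (g : Matrix (Fin (N.n+1) ⊕ Fin (N.n+1)) (Fin (N.n+1) ⊕ Fin (N.n+1)) ℂ →
    Matrix (Fin (N.n+1) ⊕ Fin (N.n+1)) (Fin (N.n+1) ⊕ Fin (N.n+1)) ℂ) :
    ∑ j : Fin (k' N ESym.cent), g (F N ESym.cent j) =
      (∑ i : Fin (N.k ESym.cent), g (sCentF N (.inl (.inl i)))) +
      (∑ i : Fin (N.k ESym.cent), g (sCentF N (.inl (.inr i)))) +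
      g (sCentF N (.inr 0)) := by
  have h1 : ∑ j : Fin (k' N ESym.cent), g (F N ESym.cent j) =
      ∑ s : (Fin (N.k ESym.cent) ⊕ Fin (N.k ESym.cent)) ⊕ Fin 1, g (sCentF N s) := by
    refine (Fintype.sum_equiv (eC N) _ _ fun s => ?_).symm
    show g (sCentF N s) = g (sCentF N ((eC N).symm ((eC N) s)))
    rw [Equiv.symm_apply_apply]
  rw [h1, Fintype.sum_sum_type, Fintype.sum_sum_type]
  simp [add_assoc]

lemma F_kraus : ∀ σ : ESym α, ∑ i, (F N σ i).conjTranspose * F N σ i = 1 := by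
  intro σ
  cases σ with
  | dollar => exact dbl_kraus _ (N.kraus ESym.dollar)
  | letter a => exact dbl_kraus _ (N.kraus (ESym.letter a))
  | cent =>
    rw [sum_F_cent N (fun A => A.conjTranspose * A)]
    have e1 : ∀ i, ((sCentF N (.inl (.inl i))).conjTranspose * sCentF N (.inl (.inl i))) =
        (2⁻¹:ℂ) • Matrix.fromBlocks ((N.E ESym.cent i).conjTranspose * N.E ESym.cent i) 0 0 0 := by
      intro i
      simp only [sCentF, Matrix.conjTranspose_smul, Matrix.smul_mul, Matrix.mul_smul,
        Matrix.fromBlocks_conjTranspose, Matrix.fromBlocks_multiply, star_rt2, smul_smul,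
        rt2_mul_self]
      simp
    have e2 : ∀ i, ((sCentF N (.inl (.inr i))).conjTranspose * sCentF N (.inl (.inr i))) =
        (2⁻¹:ℂ) • Matrix.fromBlocks ((N.E ESym.cent i).conjTranspose * N.E ESym.cent i) 0 0 0 := by
      intro i
      simp only [sCentF, Matrix.conjTranspose_smul, Matrix.smul_mul, Matrix.mul_smul,
        Matrix.fromBlocks_conjTranspose, Matrix.fromBlocks_multiply, star_rt2, smul_smul,
        rt2_mul_self]
      simp
    have e3 : ((sCentF N (.inr 0)).conjTranspose * sCentF N (.inr 0)) =
        Matrix.fromBlocks 0 0 0 1 := by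
      simp [sCentF, Matrix.fromBlocks_conjTranspose, Matrix.fromBlocks_multiply]
    rw [Finset.sum_congr rfl fun i _ => e1 i, Finset.sum_congr rfl fun i _ => e2 i, e3,
      ← Finset.smul_sum, sum_fromBlocks]
    simp only [Finset.sum_const_zero, N.kraus ESym.cent]
    rw [← add_smul]
    norm_num
    rw [Matrix.fromBlocks_add, ← Matrix.fromBlocks_one]
    simp

lemma F_cent_step (X : Matrix (Fin (N.n+1)) (Fin (N.n+1)) ℂ) :
    dstep (F N ESym.cent) (Matrix.fromBlocks X 0 0 0) =
      Matrix.fromBlocks ((2⁻¹:ℂ) • dstep (N.E ESym.cent) X) 0 0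
        ((2⁻¹:ℂ) • dstep (N.E ESym.cent) X) := by
  unfold dstep
  rw [sum_F_cent N (fun A => A * Matrix.fromBlocks X 0 0 0 * A.conjTranspose)]
  have e1 : ∀ i, sCentF N (.inl (.inl i)) * Matrix.fromBlocks X 0 0 0 *
      (sCentF N (.inl (.inl i))).conjTranspose =
      (2⁻¹:ℂ) • Matrix.fromBlocks
        (N.E ESym.cent i * X * (N.E ESym.cent i).conjTranspose) 0 0 0 := by
    intro i
    simp only [sCentF, Matrix.conjTranspose_smul, Matrix.smul_mul, Matrix.mul_smul,
      Matrix.fromBlocks_conjTranspose, Matrix.fromBlocks_multiply, star_rt2, smul_smul,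
      rt2_mul_self]
    simp
  have e2 : ∀ i, sCentF N (.inl (.inr i)) * Matrix.fromBlocks X 0 0 0 *
      (sCentF N (.inl (.inr i))).conjTranspose =
      (2⁻¹:ℂ) • Matrix.fromBlocks 0 0 0
        (N.E ESym.cent i * X * (N.E ESym.cent i).conjTranspose) := by
    intro i
    simp only [sCentF, Matrix.conjTranspose_smul, Matrix.smul_mul, Matrix.mul_smul,
      Matrix.fromBlocks_conjTranspose, Matrix.fromBlocks_multiply, star_rt2, smul_smul,
      rt2_mul_self]
    simp
  have e3 : sCentF N (.inr 0) * Matrix.fromBlocks X 0 0 0 *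
      (sCentF N (.inr 0)).conjTranspose = 0 := by
    simp [sCentF, Matrix.fromBlocks_conjTranspose, Matrix.fromBlocks_multiply]
  rw [Finset.sum_congr rfl fun i _ => e1 i, Finset.sum_congr rfl fun i _ => e2 i, e3,
    ← Finset.smul_sum, ← Finset.smul_sum, sum_fromBlocks, sum_fromBlocks, add_zero,
    Matrix.fromBlocks_smul, Matrix.fromBlocks_smul, Matrix.fromBlocks_add]
  simp

lemma stdBasis_inl :
    (Matrix.single (Sum.inl 0 : Fin (N.n+1) ⊕ Fin (N.n+1))
        (Sum.inl 0 : Fin (N.n+1) ⊕ Fin (N.n+1)) (1:ℂ)) =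
      Matrix.fromBlocks
        (Matrix.single (0 : Fin (N.n+1)) (0 : Fin (N.n+1)) (1:ℂ)) 0 0 0 := by
  ext i j
  rcases i with i | i <;> rcases j with j | j <;>
    simp [Matrix.single]

lemma F_run (w : List α) :
    (ESym.cent :: (w.map ESym.letter ++ [ESym.dollar])).foldl
      (fun ρ σ => dstep (F N σ) ρ)
      (Matrix.single (Sum.inl 0 : Fin (N.n+1) ⊕ Fin (N.n+1))
        (Sum.inl 0 : Fin (N.n+1) ⊕ Fin (N.n+1)) (1:ℂ)) =
    Matrix.fromBlocks ((2⁻¹:ℂ) • qRun N.E w) 0 0 ((2⁻¹:ℂ) • qRun N.E w) := by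
  rw [List.foldl_cons, stdBasis_inl, F_cent_step]
  have hF : ∀ σ ∈ w.map ESym.letter ++ [ESym.dollar],
      ∀ X : Matrix (Fin (N.n+1)) (Fin (N.n+1)) ℂ,
      dstep (F N σ) (Matrix.fromBlocks X 0 0 X) =
        Matrix.fromBlocks (dstep (N.E σ) X) 0 0 (dstep (N.E σ) X) := by
    intro σ hσ X
    have hne : σ ≠ ESym.cent := by
      rcases List.mem_append.mp hσ with h | h
      · rcases List.mem_map.mp h with ⟨a, _, rfl⟩
        intro hcon; cases hcon
      · simp only [List.mem_singleton] at h
        subst h; intro hcon; cases hcon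
    cases σ with
    | cent => exact absurd rfl hne
    | dollar => exact dbl_step _ X
    | letter a => exact dbl_step _ X
  have h1 := foldl_comm
    (fun X : Matrix (Fin (N.n+1)) (Fin (N.n+1)) ℂ => Matrix.fromBlocks X 0 0 X)
    (fun σ X => dstep (N.E σ) X) (fun σ ρ => dstep (F N σ) ρ)
    (w.map ESym.letter ++ [ESym.dollar]) hF
    ((2⁻¹:ℂ) • dstep (N.E ESym.cent)
      (Matrix.single (0 : Fin (N.n+1)) (0 : Fin (N.n+1)) (1:ℂ)))
  rw [h1]
  have h2 : (w.map ESym.letter ++ [ESym.dollar]).foldl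
      (fun ρ σ => dstep (N.E σ) ρ)
      ((2⁻¹:ℂ) • dstep (N.E ESym.cent)
        (Matrix.single (0 : Fin (N.n+1)) (0 : Fin (N.n+1)) (1:ℂ))) =
      (2⁻¹:ℂ) • qRun N.E w := by
    have h3 := foldl_comm
      (fun X : Matrix (Fin (N.n+1)) (Fin (N.n+1)) ℂ => (2⁻¹:ℂ) • X)
      (fun σ X => dstep (N.E σ) X) (fun σ X => dstep (N.E σ) X)
      (w.map ESym.letter ++ [ESym.dollar])
      (fun σ _ ρ => dstep_smul (N.E σ) (2⁻¹:ℂ) ρ)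
      (dstep (N.E ESym.cent)
        (Matrix.single (0 : Fin (N.n+1)) (0 : Fin (N.n+1)) (1:ℂ)))
    rw [h3, qRun_eq_foldl, List.foldl_cons]
  rw [h2]

/-- The state-reindexing equivalence. -/
def eD : (Fin (N.n+1) ⊕ Fin (N.n+1)) ≃ Fin (N.n + 1 + N.n + 1) :=
  finSumFinEquiv

lemma submatrix_sum {m m' ι₀ : Type} [Fintype ι₀] (s : Finset ι₀)
    (f : ι₀ → Matrix m m ℂ) (a b : m' → m) :
    ∑ i ∈ s, (f i).submatrix a b = (∑ i ∈ s, f i).submatrix a b := by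
  ext i j
  simp [Matrix.sum_apply]

/-- The doubled RT-QFA. -/
@[reducible] def mQFA : QFA α where
  n := N.n + 1 + N.n
  k := k' N
  E := fun σ i => (F N σ i).submatrix (eD N).symm (eD N).symm
  kraus := by
    intro σ
    have h : ∀ i : Fin (k' N σ),
        ((F N σ i).submatrix (eD N).symm (eD N).symm).conjTranspose *
          (F N σ i).submatrix (eD N).symm (eD N).symm =
        ((F N σ i).conjTranspose * F N σ i).submatrix (eD N).symm (eD N).symm := by
      intro i
      rw [Matrix.conjTranspose_submatrix, Matrix.submatrix_mul_equiv]
    rw [Finset.sum_congr rfl fun i _ => h i, submatrix_sum, F_kraus N σ,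
      Matrix.submatrix_one_equiv]
  Qa := (N.Qpa.image fun q => eD N (Sum.inl q)) ∪
    ((N.Qprᶜ).image fun q => eD N (Sum.inr q))

lemma eD_inl_zero : eD N (Sum.inl 0) = 0 := by
  have h : eD N (Sum.inl (0 : Fin (N.n+1))) = Fin.castAdd (N.n+1) 0 :=
    finSumFinEquiv_apply_left 0
  rw [h]
  apply Fin.ext
  simp

lemma run_eq (w : List α) :
    qRun (mQFA N).E w =
      (Matrix.fromBlocks ((2⁻¹:ℂ) • qRun N.E w) 0 0
        ((2⁻¹:ℂ) • qRun N.E w)).submatrix (eD N).symm (eD N).symm := by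
  rw [← F_run N w, qRun_eq_foldl]
  have h0 : (Matrix.single (0 : Fin ((mQFA N).n + 1)) (0 : Fin ((mQFA N).n + 1)) (1:ℂ))
      = (Matrix.single (Sum.inl 0 : Fin (N.n+1) ⊕ Fin (N.n+1))
          (Sum.inl 0 : Fin (N.n+1) ⊕ Fin (N.n+1))
          (1:ℂ)).submatrix (eD N).symm (eD N).symm := by
    ext i j
    simp only [Matrix.submatrix_apply, Matrix.single, Matrix.of_apply]
    have hi : ((Sum.inl 0 : Fin (N.n+1) ⊕ Fin (N.n+1)) = (eD N).symm i) ↔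
        ((0 : Fin ((mQFA N).n + 1)) = i) := by
      rw [eq_comm, Equiv.symm_apply_eq, eD_inl_zero N, eq_comm]
    have hj : ((Sum.inl 0 : Fin (N.n+1) ⊕ Fin (N.n+1)) = (eD N).symm j) ↔
        ((0 : Fin ((mQFA N).n + 1)) = j) := by
      rw [eq_comm, Equiv.symm_apply_eq, eD_inl_zero N, eq_comm]
    simp only [hi, hj]
  rw [h0]
  refine foldl_comm (fun ρ => ρ.submatrix (eD N).symm (eD N).symm)
    (fun σ ρ => dstep (F N σ) ρ) (fun σ ρ => dstep ((mQFA N).E σ) ρ) _ ?_ _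
  intro σ _ ρ
  show (∑ i : Fin (k' N σ), (F N σ i).submatrix (eD N).symm (eD N).symm *
        ρ.submatrix (eD N).symm (eD N).symm *
        ((F N σ i).submatrix (eD N).symm (eD N).symm).conjTranspose)
      = (∑ i : Fin (k' N σ), F N σ i * ρ * (F N σ i).conjTranspose).submatrix
          (eD N).symm (eD N).symm
  rw [← submatrix_sum]
  refine Finset.sum_congr rfl fun i _ => ?_
  rw [Matrix.conjTranspose_submatrix, Matrix.submatrix_mul_equiv,
    Matrix.submatrix_mul_equiv]

lemma fa_eq (w : List α) :
    (mQFA N).fa w = (1 + N.pacc w - N.prej w) / 2 := by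
  unfold QFA.fa
  rw [projM_mul_trace, run_eq]
  have hdisj : Disjoint
      ((N.Qpa.image fun q => eD N (Sum.inl q)) : Finset (Fin ((mQFA N).n + 1)))
      (((N.Qprᶜ).image fun q => eD N (Sum.inr q)) : Finset (Fin ((mQFA N).n + 1))) := by
    rw [Finset.disjoint_left]
    intro x hx hx'
    obtain ⟨a, _, ha⟩ := Finset.mem_image.mp hx
    obtain ⟨b, _, hb⟩ := Finset.mem_image.mp hx'
    have : (Sum.inl a : Fin (N.n+1) ⊕ Fin (N.n+1)) = Sum.inr b :=
      (eD N).injective (by rw [ha, hb])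
    exact Sum.inl_ne_inr this
  have hQa : (mQFA N).Qa = (N.Qpa.image fun q => eD N (Sum.inl q)) ∪
      ((N.Qprᶜ).image fun q => eD N (Sum.inr q)) := rfl
  rw [hQa, Finset.sum_union hdisj]
  set B : Matrix (Fin ((mQFA N).n + 1)) (Fin ((mQFA N).n + 1)) ℂ :=
    (Matrix.fromBlocks ((2⁻¹:ℂ) • qRun N.E w) 0 0
      ((2⁻¹:ℂ) • qRun N.E w)).submatrix (eD N).symm (eD N).symm with hB
  have him1 : ∑ x ∈ ((N.Qpa.image fun q => eD N (Sum.inl q)) :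
        Finset (Fin ((mQFA N).n + 1))), B x x =
      ∑ q ∈ N.Qpa, B (eD N (Sum.inl q)) (eD N (Sum.inl q)) :=
    Finset.sum_image (fun a _ b _ h => Sum.inl_injective ((eD N).injective h))
  have him2 : ∑ x ∈ (((N.Qprᶜ).image fun q => eD N (Sum.inr q)) :
        Finset (Fin ((mQFA N).n + 1))), B x x =
      ∑ q ∈ N.Qprᶜ, B (eD N (Sum.inr q)) (eD N (Sum.inr q)) :=
    Finset.sum_image (fun a _ b _ h => Sum.inr_injective ((eD N).injective h))
  rw [him1, him2, hB]
  have hent1 : ∀ q : Fin (N.n+1),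
      ((Matrix.fromBlocks ((2⁻¹:ℂ) • qRun N.E w) 0 0
        ((2⁻¹:ℂ) • qRun N.E w)).submatrix (eD N).symm (eD N).symm)
        (eD N (Sum.inl q)) (eD N (Sum.inl q)) = (2⁻¹:ℂ) * (qRun N.E w) q q := by
    intro q
    rw [Matrix.submatrix_apply, Equiv.symm_apply_apply]
    simp
  have hent2 : ∀ q : Fin (N.n+1),
      ((Matrix.fromBlocks ((2⁻¹:ℂ) • qRun N.E w) 0 0
        ((2⁻¹:ℂ) • qRun N.E w)).submatrix (eD N).symm (eD N).symm)
        (eD N (Sum.inr q)) (eD N (Sum.inr q)) = (2⁻¹:ℂ) * (qRun N.E w) q q := by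
    intro q
    rw [Matrix.submatrix_apply, Equiv.symm_apply_apply]
    simp
  rw [Finset.sum_congr rfl fun q _ => hent1 q, Finset.sum_congr rfl fun q _ => hent2 q,
    ← Finset.mul_sum, ← Finset.mul_sum]
  have htr : ∑ q, (qRun N.E w) q q = 1 := by
    simpa [Matrix.trace, Matrix.diag] using qRun_trace N.E N.kraus w
  have hcompl : ∑ q ∈ N.Qprᶜ, (qRun N.E w) q q =
      1 - ∑ q ∈ N.Qpr, (qRun N.E w) q q := by
    have h2 := Finset.sum_add_sum_compl N.Qpr (fun q => (qRun N.E w) q q)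
    rw [htr] at h2
    linear_combination h2
  rw [hcompl]
  have hpa : N.pacc w = (∑ q ∈ N.Qpa, (qRun N.E w) q q).re := by
    simp only [LPostQFA.pacc]
    rw [projM_mul_trace]
  have hpr : N.prej w = (∑ q ∈ N.Qpr, (qRun N.E w) q q).re := by
    simp only [LPostQFA.prej]
    rw [projM_mul_trace]
  rw [hpa, hpr]
  have h12 : (2⁻¹ : ℂ) = ((2⁻¹ : ℝ) : ℂ) := by norm_num
  rw [h12, Complex.add_re, Complex.re_ofReal_mul, Complex.re_ofReal_mul,
    Complex.sub_re, Complex.one_re]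
  ring

lemma psd_diag_nonneg' {m : Type} [Fintype m] [DecidableEq m]
    {A : Matrix m m ℂ} (hA : A.PosSemidef) (q : m) : (0:ℂ) ≤ A q q := by
  have h := hA.dotProduct_mulVec_nonneg (Pi.single q 1)
  have heq : (star (Pi.single q 1 : m → ℂ)) ⬝ᵥ (A *ᵥ Pi.single q 1) = A q q := by
    rw [Matrix.mulVec_single]
    simp [dotProduct, Pi.single_apply, apply_ite]
  rwa [heq] at h

lemma pacc_nonneg (w : List α) : 0 ≤ N.pacc w := by
  simp only [LPostQFA.pacc]
  rw [projM_mul_trace]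
  have h : (0:ℂ) ≤ ∑ q ∈ N.Qpa, (qRun N.E w) q q :=
    Finset.sum_nonneg fun q _ => psd_diag_nonneg' (qRun_psd N.E w) q
  exact (Complex.le_def.mp h).1

lemma prej_nonneg (w : List α) : 0 ≤ N.prej w := by
  simp only [LPostQFA.prej]
  rw [projM_mul_trace]
  have h : (0:ℂ) ≤ ∑ q ∈ N.Qpr, (qRun N.E w) q q :=
    Finset.sum_nonneg fun q _ => psd_diag_nonneg' (qRun_psd N.E w) q
  exact (Complex.le_def.mp h).1

end Construction


end LPQAux

/-- `LPostQAL ⊆ uQAL`: a language recognized with error bound `ε < 1/2` by a Latvian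
RT-PostQFA is recognized by some RT-QFA with a (strict or nonstrict) cutpoint; moreover,
if the flag is `A` it is recognized with a nonstrict cutpoint, and if the flag is `R`
with a strict cutpoint. -/
theorem LPostQAL_subset_uQAL {α : Type} [Fintype α] (L : Set (List α)) (N : LPostQFA α)
    (ε : ℝ) (hε0 : 0 ≤ ε) (hε : ε < 1 / 2) (hrec : N.Recognizes L ε) :
    (∃ (M : QFA α) (lam : ℝ),
        L = {w : List α | lam < M.fa w} ∨ L = {w : List α | lam ≤ M.fa w}) ∧
      (N.tau = PostFlag.A → ∃ (M : QFA α) (lam : ℝ), L = {w : List α | lam ≤ M.fa w}) ∧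
      (N.tau = PostFlag.R → ∃ (M : QFA α) (lam : ℝ), L = {w : List α | lam < M.fa w}) := by
  set M := LPQAux.mQFA N with hM
  have hfa : ∀ w, M.fa w = (1 + N.pacc w - N.prej w) / 2 := LPQAux.fa_eq N
  have ha : ∀ w, 0 ≤ N.pacc w := LPQAux.pacc_nonneg N
  have hr : ∀ w, 0 ≤ N.prej w := LPQAux.prej_nonneg N
  have hmem : ∀ w ∈ L, 0 < N.pacc w + N.prej w → N.prej w < N.pacc w := by
    intro w hw hs
    have h1 := (hrec w).1 hw
    unfold LPostQFA.fa at h1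
    rw [if_pos hs] at h1
    have h2 := (le_div_iff₀ hs).mp h1
    nlinarith [mul_pos (show (0:ℝ) < 1 - 2*ε by linarith) hs]
  have hnot : ∀ w ∉ L, 0 < N.pacc w + N.prej w → N.pacc w < N.prej w := by
    intro w hw hs
    have h1 := (hrec w).2 hw
    unfold LPostQFA.fa at h1
    rw [if_pos hs] at h1
    have h2 := (div_le_iff₀ hs).mp h1
    nlinarith [mul_pos (show (0:ℝ) < 1 - 2*ε by linarith) hs]
  have hzero : ∀ w, ¬ 0 < N.pacc w + N.prej w → N.pacc w = 0 ∧ N.prej w = 0 := by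
    intro w h
    constructor <;> nlinarith [ha w, hr w]
  have hA : N.tau = PostFlag.A → L = {w : List α | (1:ℝ)/2 ≤ M.fa w} := by
    intro ht
    ext w
    simp only [Set.mem_setOf_eq, hfa w]
    constructor
    · intro hw
      by_cases hs : 0 < N.pacc w + N.prej w
      · have := hmem w hw hs; linarith
      · obtain ⟨h1, h2⟩ := hzero w hs
        rw [h1, h2]; norm_num
    · intro hw
      by_contra hwL
      by_cases hs : 0 < N.pacc w + N.prej w
      · have := hnot w hwL hs; linarith
      · have h1 := (hrec w).2 hwL
        unfold LPostQFA.fa at h1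
        rw [if_neg hs, if_pos ht] at h1
        linarith
  have hR : N.tau = PostFlag.R → L = {w : List α | (1:ℝ)/2 < M.fa w} := by
    intro ht
    ext w
    simp only [Set.mem_setOf_eq, hfa w]
    constructor
    · intro hw
      by_cases hs : 0 < N.pacc w + N.prej w
      · have := hmem w hw hs; linarith
      · have h1 := (hrec w).1 hw
        unfold LPostQFA.fa at h1
        rw [if_neg hs, if_neg (by rw [ht]; intro hcon; cases hcon)] at h1
        linarith
    · intro hw
      by_contra hwL
      by_cases hs : 0 < N.pacc w + N.prej w
      · have := hnot w hwL hs; linarith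
      · obtain ⟨h1, h2⟩ := hzero w hs
        rw [h1, h2] at hw
        norm_num at hw
  refine ⟨?_, fun ht => ⟨M, 1/2, hA ht⟩, fun ht => ⟨M, 1/2, hR ht⟩⟩
  cases htau : N.tau with
  | A => exact ⟨M, 1/2, Or.inr (hA htau)⟩
  | R => exact ⟨M, 1/2, Or.inl (hR htau)⟩
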